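/- Let G_• be a filtered group. For any face F of {0,1}^k of codimension r and any x ∈ G_r, the configuration [x]_F lies in HK^k(G_•). -/

import Mathlib

open Subgroup

/-- A filtration on a group `G`: a chain `G = G₀ ⊇ G₁ ⊇ ...` of subgroups with
`[Gᵢ, Gⱼ] ⊆ G_{i+j}` for all `i j`. -/
structure IsGroupFiltration {G : Type*} [Group G] (Gf : ℕ → Subgroup G) : Prop where
  top : Gf 0 = ⊤
  mono : ∀ i, Gf (i + 1) ≤ Gf i
  comm : ∀ i j, ⁅Gf i, Gf j⁆ ≤ Gf (i + j)

/-- The top vertex `(1,…,1)` of the discrete cube `{0,1}^k`. -/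
def topVert (k : ℕ) : Fin k → Bool := fun _ => true

/-- The configuration `[x]_{F_S}`: equal to `x` on the upper face `F_S = {ω : ω ⊇ S}`
and the identity elsewhere. -/
def upperFaceConfig {G : Type*} [Group G] {k : ℕ} (S : Finset (Fin k)) (x : G) :
    (Fin k → Bool) → G :=
  fun ω => if ∀ i ∈ S, ω i = true then x else 1

/-- The Host–Kra cube group `HK^k(G_•)`: the subgroup of `G^{{0,1}^k}` generated by the
configurations `[x]_{F_S}` with `x ∈ G_{|S|}`. -/
def hostKra {G : Type*} [Group G] (Gf : ℕ → Subgroup G) (k : ℕ) :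
    Subgroup ((Fin k → Bool) → G) :=
  Subgroup.closure { c | ∃ (S : Finset (Fin k)) (x : G), x ∈ Gf S.card ∧ c = upperFaceConfig S x }

theorem face_mem_hostKra_aux {G : Type*} [Group G] (Gf : ℕ → Subgroup G)
    (hf : IsGroupFiltration Gf) (k : ℕ) :
    ∀ (n : ℕ) (T : Finset (Fin k)) (ε : Fin k → Bool) (x : G),
      (T.filter fun i => ε i = false).card = n → x ∈ Gf T.card →
      (fun ω : Fin k → Bool => if ∀ i ∈ T, ω i = ε i then x else 1) ∈ hostKra Gf k := by
  intro n
  induction n with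
  | zero =>
    intro T ε x hn hx
    have hall : ∀ i ∈ T, ε i = true := by
      intro i hi
      rcases Bool.eq_false_or_eq_true (ε i) with h | h
      · exact h
      · exfalso
        have : i ∈ T.filter fun i => ε i = false := Finset.mem_filter.2 ⟨hi, h⟩
        rw [Finset.card_eq_zero.1 hn] at this
        exact absurd this (Finset.notMem_empty i)
    have heq : (fun ω : Fin k → Bool => if ∀ i ∈ T, ω i = ε i then x else 1)
        = upperFaceConfig T x := by
      funext ω
      simp only [upperFaceConfig]
      congr 1
      simp only [eq_iff_iff]
      constructor
      · intro h i hi; rw [h i hi, hall i hi]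
      · intro h i hi; rw [h i hi, hall i hi]
    rw [heq]
    exact Subgroup.subset_closure ⟨T, x, hx, rfl⟩
  | succ n ih =>
    intro T ε x hn hx
    have hne : (T.filter fun i => ε i = false).Nonempty := by
      rw [← Finset.card_pos, hn]; exact Nat.succ_pos n
    obtain ⟨i, hif⟩ := hne
    obtain ⟨hiT, hie⟩ := Finset.mem_filter.1 hif
    set ε' := Function.update ε i true with hε'
    have heq : (fun ω : Fin k → Bool => if ∀ j ∈ T, ω j = ε j then x else 1)
        = (fun ω : Fin k → Bool => if ∀ j ∈ T.erase i, ω j = ε j then x else 1) *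
          (fun ω : Fin k → Bool => if ∀ j ∈ T, ω j = ε' j then x else 1)⁻¹ := by
      funext ω
      simp only [Pi.mul_apply, Pi.inv_apply]
      have hTA : (∀ j ∈ T, ω j = ε j) ↔ (ω i = ε i ∧ ∀ j ∈ T.erase i, ω j = ε j) := by
        constructor
        · intro h; exact ⟨h i hiT, fun j hj => h j (Finset.mem_of_mem_erase hj)⟩
        · rintro ⟨h1, h2⟩ j hj
          rcases eq_or_ne j i with rfl | hji
          · exact h1
          · exact h2 j (Finset.mem_erase.2 ⟨hji, hj⟩)
      have hTB : (∀ j ∈ T, ω j = ε' j) ↔ (ω i = true ∧ ∀ j ∈ T.erase i, ω j = ε j) := by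
        constructor
        · intro h
          refine ⟨by simpa [hε'] using h i hiT, fun j hj => ?_⟩
          obtain ⟨hji, hjT⟩ := Finset.mem_erase.1 hj
          have := h j hjT
          rwa [hε', Function.update_of_ne hji] at this
        · rintro ⟨h1, h2⟩ j hj
          rcases eq_or_ne j i with rfl | hji
          · simpa [hε'] using h1
          · rw [hε', Function.update_of_ne hji]
            exact h2 j (Finset.mem_erase.2 ⟨hji, hj⟩)
      rcases Bool.eq_false_or_eq_true (ω i) with hωi | hωi
      · have hA : ¬ (∀ j ∈ T, ω j = ε j) := by
          rw [hTA, hωi, hie]; simp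
        have hB : (∀ j ∈ T, ω j = ε' j) ↔ (∀ j ∈ T.erase i, ω j = ε j) := by
          rw [hTB, hωi]; simp
        by_cases hC : ∀ j ∈ T.erase i, ω j = ε j
        · rw [if_neg hA, if_pos hC, if_pos (hB.2 hC), mul_inv_cancel]
        · rw [if_neg hA, if_neg hC, if_neg (fun h => hC (hB.1 h)), inv_one, mul_one]
      · have hB : ¬ (∀ j ∈ T, ω j = ε' j) := by
          rw [hTB, hωi]; simp
        have hA : (∀ j ∈ T, ω j = ε j) ↔ (∀ j ∈ T.erase i, ω j = ε j) := by
          rw [hTA, hωi, hie]; simp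
        by_cases hC : ∀ j ∈ T.erase i, ω j = ε j
        · rw [if_pos (hA.2 hC), if_pos hC, if_neg hB, inv_one, mul_one]
        · rw [if_neg (fun h => hC (hA.1 h)), if_neg hC, if_neg hB, inv_one, mul_one]
    rw [heq]
    have hcard : T.card = (T.erase i).card + 1 :=
      (Finset.card_erase_add_one hiT).symm
    have hx' : x ∈ Gf (T.erase i).card := by
      apply hf.mono
      rwa [← hcard]
    have h1 : ((T.erase i).filter fun j => ε j = false).card = n := by
      have : (T.erase i).filter (fun j => ε j = false)
          = (T.filter fun j => ε j = false).erase i := by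
        ext j
        simp only [Finset.mem_filter, Finset.mem_erase]
        tauto
      rw [this, Finset.card_erase_of_mem hif, hn]
      omega
    have h2 : (T.filter fun j => ε' j = false).card = n := by
      have : T.filter (fun j => ε' j = false) = (T.filter fun j => ε j = false).erase i := by
        ext j
        simp only [Finset.mem_filter, Finset.mem_erase, hε']
        constructor
        · rintro ⟨hjT, hj⟩
          have hji : j ≠ i := by
            rintro rfl; rw [Function.update_self] at hj; cases hj
          rw [Function.update_of_ne hji] at hj
          exact ⟨hji, hjT, hj⟩
        · rintro ⟨hji, hjT, hj⟩
          rw [Function.update_of_ne hji]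
          exact ⟨hjT, hj⟩
      rw [this, Finset.card_erase_of_mem hif, hn]
      omega
    exact mul_mem (ih (T.erase i) ε x h1 hx') (inv_mem (ih T ε' x h2 hx))

/-- For any face `F` of `{0,1}^k` of codimension `r` (obtained by fixing the
coordinates in a set `T` of size `r` to the values `ε`) and any `x ∈ G_r`, the configuration
`[x]_F` lies in `HK^k(G_•)`. -/
theorem face_mem_hostKra {G : Type*} [Group G] (Gf : ℕ → Subgroup G)
    (hf : IsGroupFiltration Gf) (k : ℕ) (T : Finset (Fin k)) (ε : Fin k → Bool)
    (x : G) (hx : x ∈ Gf T.card) :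
    (fun ω : Fin k → Bool => if ∀ i ∈ T, ω i = ε i then x else 1) ∈ hostKra Gf k :=
  face_mem_hostKra_aux Gf hf k _ T ε x rfl hx
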